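/- Assume the Setup (Notation 7.1) with G a finite group, let p = [G : P] and q = [G : Q], and let (Z_j)_{j ∈ J} be a finite family of subsets of E. Define ‖X‖ = Σ_{j ∈ J} Σ_{g ∈ G} |X|*_{g • Z_j} for X ⊆ E. Then p·‖α ∩ β‖ + q·‖β ∪ Q • α‖ ≤ p·‖α‖ + q·‖β‖. -/
import Mathlib


open Pointwise

open scoped Classical

/-- `sep X Z` is the indicator `|X|*_Z`: it is `1` if `X` separates `Z`
(i.e. `Z` meets both `X` and its complement) and `0` otherwise. -/
noncomputable def sep {E : Type*} (X Z : Set E) : ℕ :=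
  if (Z ∩ X).Nonempty ∧ (Z ∩ Xᶜ).Nonempty then 1 else 0

section Aux

variable {G E : Type*} [Group G] [MulAction G E]

lemma sep_le_one (X W : Set E) : sep X W ≤ 1 := by
  unfold sep; split <;> simp

lemma sep_eq_one {X W : Set E} (h1 : (W ∩ X).Nonempty) (h2 : (W ∩ Xᶜ).Nonempty) :
    sep X W = 1 := by
  unfold sep; exact if_pos ⟨h1, h2⟩

lemma sep_eq_zero {X W : Set E} (h : ¬ ((W ∩ X).Nonempty ∧ (W ∩ Xᶜ).Nonempty)) :
    sep X W = 0 := by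
  unfold sep; exact if_neg h

lemma sep_smul (g : G) (X W : Set E) : sep X (g • W) = sep (g⁻¹ • X) W := by
  have e1 : g • W ∩ X = g • (W ∩ g⁻¹ • X) := by
    rw [Set.smul_set_inter, smul_inv_smul]
  have e2 : g • W ∩ Xᶜ = g • (W ∩ (g⁻¹ • X)ᶜ) := by
    rw [Set.smul_set_inter, ← Set.smul_set_compl, smul_inv_smul]
  unfold sep
  rw [e1, e2]
  simp only [Set.smul_set_nonempty]

lemma sum_sep_smul [Fintype G] (X W : Set E) :
    ∑ g : G, sep X (g • W) = ∑ g : G, sep (g • X) W := by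
  simp only [sep_smul]
  exact Fintype.sum_equiv (Equiv.inv G) _ _ (fun g => by simp)

/-- The core combinatorial inequality: if the `A i` are pairwise equal-or-disjoint
and every "equality class" `{j | A j = A i}` satisfies `p * #class = q * n`,
then the submodular-type inequality holds. -/
lemma core {E ι : Type*} [Fintype ι] (A : ι → Set E) (B W : Set E)
    (hdisj : ∀ i j, (A i ∩ A j).Nonempty → A i = A j)
    (p q n : ℕ)
    (hcount : ∀ i : ι, p * (Finset.univ.filter fun j => A j = A i).card = q * n) :
    p * ∑ i, sep (A i ∩ B) W + (q * n) * sep (B ∪ ⋃ i, A i) W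
      ≤ p * ∑ i, sep (A i) W + (q * n) * sep B W := by
  by_cases hBU : (W ∩ (B ∪ ⋃ i, A i)).Nonempty ∧ (W ∩ (B ∪ ⋃ i, A i)ᶜ).Nonempty
  · -- `W` separates `B ∪ U`
    have hsepBU : sep (B ∪ ⋃ i, A i) W = 1 := sep_eq_one hBU.1 hBU.2
    obtain ⟨z₂, hz₂W, hz₂c⟩ := hBU.2
    have hz₂B : z₂ ∈ Bᶜ := fun h => hz₂c (Or.inl h)
    have hz₂A : ∀ i, z₂ ∈ (A i)ᶜ := fun i h => hz₂c (Or.inr (Set.mem_iUnion.2 ⟨i, h⟩))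
    by_cases hWB : (W ∩ B).Nonempty
    · -- `W` meets `B`
      have hsepB : sep B W = 1 := sep_eq_one hWB ⟨z₂, hz₂W, hz₂B⟩
      rw [hsepBU, hsepB]
      have hterm : ∀ i, sep (A i ∩ B) W ≤ sep (A i) W := by
        intro i
        by_cases hi : (W ∩ (A i ∩ B)).Nonempty ∧ (W ∩ (A i ∩ B)ᶜ).Nonempty
        · obtain ⟨z, hzW, hzA, _⟩ := hi.1
          rw [sep_eq_one ⟨z, hzW, hzA⟩ ⟨z₂, hz₂W, hz₂A i⟩]
          exact sep_le_one _ _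
        · rw [sep_eq_zero hi]; exact Nat.zero_le _
      exact Nat.add_le_add
        (Nat.mul_le_mul_left p (Finset.sum_le_sum fun i _ => hterm i)) le_rfl
    · -- `W` misses `B`; it must meet some `A k₀`
      have hzero : ∀ i, sep (A i ∩ B) W = 0 := by
        intro i
        refine sep_eq_zero fun h => hWB ?_
        obtain ⟨z, hzW, _, hzB⟩ := h.1
        exact ⟨z, hzW, hzB⟩
      obtain ⟨z₁, hz₁W, hz₁BU⟩ := hBU.1
      have hz₁U : z₁ ∈ ⋃ i, A i := by
        rcases hz₁BU with h | h
        · exact absurd ⟨z₁, hz₁W, h⟩ hWB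
        · exact h
      obtain ⟨k₀, hk₀⟩ := Set.mem_iUnion.1 hz₁U
      have hsum : (Finset.univ.filter fun j => A j = A k₀).card ≤ ∑ i, sep (A i) W := by
        calc (Finset.univ.filter fun j => A j = A k₀).card
            = ∑ i ∈ Finset.univ.filter (fun j => A j = A k₀), 1 := by
              simp
          _ ≤ ∑ i ∈ Finset.univ.filter (fun j => A j = A k₀), sep (A i) W := by
              refine Finset.sum_le_sum fun i hi => ?_
              have hAi : A i = A k₀ := (Finset.mem_filter.1 hi).2
              rw [sep_eq_one ⟨z₁, hz₁W, hAi ▸ hk₀⟩ ⟨z₂, hz₂W, hz₂A i⟩]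
          _ ≤ ∑ i, sep (A i) W :=
              Finset.sum_le_sum_of_subset (Finset.filter_subset _ _)
      calc p * ∑ i, sep (A i ∩ B) W + (q * n) * sep (B ∪ ⋃ i, A i) W
          = q * n := by
            simp [hzero, hsepBU]
        _ = p * (Finset.univ.filter fun j => A j = A k₀).card := (hcount k₀).symm
        _ ≤ p * ∑ i, sep (A i) W := Nat.mul_le_mul_left p hsum
        _ ≤ p * ∑ i, sep (A i) W + (q * n) * sep B W := Nat.le_add_right _ _
  · -- `W` does not separate `B ∪ U`
    rw [sep_eq_zero hBU, Nat.mul_zero, Nat.add_zero]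
    by_cases hprob : ∃ k, ((W ∩ (A k ∩ B)).Nonempty ∧ (W ∩ (A k ∩ B)ᶜ).Nonempty) ∧ W ⊆ A k
    · obtain ⟨k₁, hk₁sep, hk₁sub⟩ := hprob
      obtain ⟨z, hzW, hzA, hzB⟩ := hk₁sep.1
      -- `W` separates `B`
      obtain ⟨w, hwW, hwc⟩ := hk₁sep.2
      have hwB : w ∈ Bᶜ := fun h => hwc ⟨hk₁sub hwW, h⟩
      have hsepB : sep B W = 1 := sep_eq_one ⟨z, hzW, hzB⟩ ⟨w, hwW, hwB⟩
      rw [hsepB, Nat.mul_one]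
      -- split the left sum over whether `W ⊆ A i`
      have hsplit : ∑ i, sep (A i ∩ B) W =
          (∑ i ∈ Finset.univ.filter (fun i => W ⊆ A i), sep (A i ∩ B) W) +
          ∑ i ∈ Finset.univ.filter (fun i => ¬ W ⊆ A i), sep (A i ∩ B) W :=
        (Finset.sum_filter_add_sum_filter_not _ _ _).symm
      have h1 : ∑ i ∈ Finset.univ.filter (fun i => W ⊆ A i), sep (A i ∩ B) W ≤
          (Finset.univ.filter fun j => A j = A k₁).card := by
        calc ∑ i ∈ Finset.univ.filter (fun i => W ⊆ A i), sep (A i ∩ B) W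
            ≤ ∑ _i ∈ Finset.univ.filter (fun i => W ⊆ A i), 1 :=
              Finset.sum_le_sum fun i _ => sep_le_one _ _
          _ = (Finset.univ.filter (fun i => W ⊆ A i)).card := by simp
          _ ≤ (Finset.univ.filter fun j => A j = A k₁).card := by
              refine Finset.card_le_card fun i hi => ?_
              have hsub : W ⊆ A i := (Finset.mem_filter.1 hi).2
              refine Finset.mem_filter.2 ⟨Finset.mem_univ _, ?_⟩
              exact hdisj i k₁ ⟨z, hsub hzW, hk₁sub hzW⟩
      have h2 : ∑ i ∈ Finset.univ.filter (fun i => ¬ W ⊆ A i), sep (A i ∩ B) W ≤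
          ∑ i, sep (A i) W := by
        calc ∑ i ∈ Finset.univ.filter (fun i => ¬ W ⊆ A i), sep (A i ∩ B) W
            ≤ ∑ i ∈ Finset.univ.filter (fun i => ¬ W ⊆ A i), sep (A i) W := by
              refine Finset.sum_le_sum fun i hi => ?_
              have hnsub : ¬ W ⊆ A i := (Finset.mem_filter.1 hi).2
              obtain ⟨v, hvW, hvA⟩ := Set.not_subset.1 hnsub
              by_cases hsi : (W ∩ (A i ∩ B)).Nonempty ∧ (W ∩ (A i ∩ B)ᶜ).Nonempty
              · obtain ⟨u, huW, huA, _⟩ := hsi.1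
                rw [sep_eq_one ⟨u, huW, huA⟩ ⟨v, hvW, hvA⟩]
                exact sep_le_one _ _
              · rw [sep_eq_zero hsi]; exact Nat.zero_le _
          _ ≤ ∑ i, sep (A i) W :=
              Finset.sum_le_sum_of_subset (Finset.filter_subset _ _)
      calc p * ∑ i, sep (A i ∩ B) W
          = p * (∑ i ∈ Finset.univ.filter (fun i => W ⊆ A i), sep (A i ∩ B) W) +
            p * ∑ i ∈ Finset.univ.filter (fun i => ¬ W ⊆ A i), sep (A i ∩ B) W := by
            rw [hsplit, Nat.mul_add]
        _ ≤ p * (Finset.univ.filter fun j => A j = A k₁).card + p * ∑ i, sep (A i) W :=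
            Nat.add_le_add (Nat.mul_le_mul_left p h1) (Nat.mul_le_mul_left p h2)
        _ = q * n + p * ∑ i, sep (A i) W := by rw [hcount k₁]
        _ = p * ∑ i, sep (A i) W + q * n := Nat.add_comm _ _
    · -- no problematic index: termwise
      push_neg at hprob
      have hterm : ∀ i, sep (A i ∩ B) W ≤ sep (A i) W := by
        intro i
        by_cases hsi : (W ∩ (A i ∩ B)).Nonempty ∧ (W ∩ (A i ∩ B)ᶜ).Nonempty
        · have hnsub := hprob i hsi
          obtain ⟨v, hvW, hvA⟩ := Set.not_subset.1 hnsub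
          obtain ⟨u, huW, huA, _⟩ := hsi.1
          rw [sep_eq_one ⟨u, huW, huA⟩ ⟨v, hvW, hvA⟩]
          exact sep_le_one _ _
        · rw [sep_eq_zero hsi]; exact Nat.zero_le _
      exact le_trans (Nat.mul_le_mul_left p (Finset.sum_le_sum fun i _ => hterm i))
        (Nat.le_add_right _ _)

end Aux

/-- Lemma 7.9 (combinatorial content): in the Setup (Notation 7.1) with `G`
finite, `p = [G : P]`, `q = [G : Q]`, and `‖X‖ = Σ_j Σ_{g ∈ G} |X|*_{g • Z_j}`
for a finite family `(Z_j)`, we have `p‖α ∩ β‖ + q‖β ∪ Q•α‖ ≤ p‖α‖ + q‖β‖`. -/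
theorem stmt_7 {G E : Type*} [Group G] [Fintype G] [MulAction G E]
    (α β : Set E) (hα : α.Nonempty) (hβ : β.Nonempty)
    (hedgeα : ∀ x : G, (α ∩ x • α).Nonempty → x • α = α)
    (hedgeβ : ∀ x : G, (β ∩ x • β).Nonempty → x • β = β)
    (P Q : Subgroup G)
    (hP : P = MulAction.stabilizer G α)
    (hQ : Q = MulAction.stabilizer G β)
    (hαβ : (α ∩ β).Nonempty)
    (hPQ : P ≤ Q)
    (hsimple : ∀ g : G, (α ∩ g • β).Nonempty → g ∈ Q)
    (p q : ℕ) (hp : p = P.index) (hq : q = Q.index)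
    {J : Type*} [Fintype J] (Z : J → Set E)
    (norm : Set E → ℕ)
    (hnorm : ∀ X : Set E, norm X = ∑ j : J, ∑ g : G, sep X (g • Z j)) :
    p * norm (α ∩ β) + q * norm (β ∪ ⋃ x ∈ Q, x • α) ≤
      p * norm α + q * norm β := by
  have hQβ : ∀ k : G, k ∈ Q → k • β = β := by
    intro k hk; rw [hQ] at hk; exact hk
  have hPα : ∀ k : G, k ∈ P ↔ k • α = α := by
    intro k; rw [hP]; exact Iff.rfl
  have key : ∀ W : Set E,
      p * ∑ g : G, sep (α ∩ β) (g • W) + q * ∑ g : G, sep (β ∪ ⋃ x ∈ Q, x • α) (g • W)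
      ≤ p * ∑ g : G, sep α (g • W) + q * ∑ g : G, sep β (g • W) := by
    intro W
    rw [sum_sep_smul, sum_sep_smul, sum_sep_smul, sum_sep_smul]
    have hQpos : 0 < Fintype.card Q := Fintype.card_pos
    refine Nat.le_of_mul_le_mul_left ?_ hQpos
    have hexp : ∀ X : Set E, Fintype.card Q * ∑ g : G, sep (g • X) W
        = ∑ h : G, ∑ k : Q, sep ((h * (k : G)) • X) W := by
      intro X
      rw [Finset.sum_comm]
      have hin : ∀ k : Q, ∑ h : G, sep ((h * (k : G)) • X) W = ∑ g : G, sep (g • X) W := by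
        intro k
        exact Fintype.sum_equiv (Equiv.mulRight (k : G)) _ _ (fun h => rfl)
      rw [Finset.sum_congr rfl fun k _ => hin k]
      simp [Finset.sum_const, mul_comm]
    have hdistr : ∀ a b : ℕ, Fintype.card Q * (p * a + q * b)
        = p * (Fintype.card Q * a) + q * (Fintype.card Q * b) := by
      intro a b; ring
    rw [hdistr, hdistr, hexp, hexp, hexp, hexp, Finset.mul_sum, Finset.mul_sum,
      Finset.mul_sum, Finset.mul_sum, ← Finset.sum_add_distrib, ← Finset.sum_add_distrib]
    refine Finset.sum_le_sum fun h _ => ?_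
    -- Notation for the pieces
    set A : Q → Set E := fun k => (h * (k : G)) • α with hA
    set B : Set E := h • β with hB
    -- rewrite each of the four inner sums
    have e1 : ∀ k : Q, (h * (k : G)) • (α ∩ β) = A k ∩ B := by
      intro k
      rw [Set.smul_set_inter, hA, hB]
      congr 1
      rw [mul_smul, hQβ k k.2]
    have e2 : ∀ k : Q, (h * (k : G)) • β = B := by
      intro k; rw [mul_smul, hQβ k k.2, hB]
    have e3 : ∀ k : Q, (h * (k : G)) • (β ∪ ⋃ x ∈ Q, x • α) = B ∪ ⋃ k' : Q, A k' := by
      intro k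
      rw [Set.smul_set_union, e2]
      congr 1
      ext z
      simp only [Set.mem_smul_set_iff_inv_smul_mem, Set.mem_iUnion, hA]
      constructor
      · rintro ⟨x, hx, hz⟩
        refine ⟨⟨(k : G) * x, mul_mem k.2 hx⟩, ?_⟩
        simpa [mul_inv_rev, mul_smul] using hz
      · rintro ⟨k', hz⟩
        refine ⟨(k : G)⁻¹ * (k' : G), mul_mem (inv_mem k.2) k'.2, ?_⟩
        simpa [mul_inv_rev, mul_smul] using hz
    have e4 : ∀ k : Q, (h * (k : G)) • α = A k := fun k => rfl
    rw [Finset.sum_congr rfl fun k _ => congrArg (fun X => sep X W) (e1 k),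
      Finset.sum_congr rfl fun k _ => congrArg (fun X => sep X W) (e2 k),
      Finset.sum_congr rfl fun k _ => congrArg (fun X => sep X W) (e3 k)]
    rw [Finset.sum_const, Finset.sum_const, Finset.card_univ, smul_eq_mul, smul_eq_mul,
      ← Nat.mul_assoc, ← Nat.mul_assoc]
    beta_reduce
    -- disjointness of translates
    have hdisj : ∀ k k' : Q, (A k ∩ A k').Nonempty → A k = A k' := by
      intro k k' hne
      have h1 : ((k : G) • α ∩ (k' : G) • α).Nonempty := by
        rw [hA] at hne
        simp only [mul_smul, ← Set.smul_set_inter] at hne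
        exact Set.smul_set_nonempty.1 hne
      have h2 : (α ∩ ((k : G)⁻¹ * (k' : G)) • α).Nonempty := by
        obtain ⟨z, hz1, hz2⟩ := h1
        refine ⟨(k : G)⁻¹ • z, ?_, ?_⟩
        · rw [← Set.mem_smul_set_iff_inv_smul_mem]; exact hz1
        · rw [mul_smul, Set.mem_smul_set_iff_inv_smul_mem, inv_smul_smul]
          exact hz2
      have h3 := hedgeα _ h2
      have h4 : (k' : G) • α = (k : G) • α := by
        calc (k' : G) • α = ((k : G) * ((k : G)⁻¹ * (k' : G))) • α := by
              rw [mul_inv_cancel_left]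
          _ = (k : G) • (((k : G)⁻¹ * (k' : G)) • α) := mul_smul _ _ _
          _ = (k : G) • α := by rw [h3]
      rw [hA]
      simp only [mul_smul, h4]
    -- the counting hypothesis
    have hcard : ∀ i : Q, (Finset.univ.filter fun k : Q => A k = A i).card
        = Fintype.card P := by
      intro i
      have hiff : ∀ k : Q, A k = A i ↔ ((i : G)⁻¹ * (k : G)) ∈ P := by
        intro k
        rw [hPα]
        constructor
        · intro hk
          have : (k : G) • α = (i : G) • α := by
            rw [hA] at hk
            simp only [mul_smul] at hk
            exact smul_left_cancel_iff h |>.1 hk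
          rw [mul_smul, this, inv_smul_smul]
        · intro hk
          have : (k : G) • α = (i : G) • α := by
            rw [mul_smul] at hk
            calc (k : G) • α = (i : G) • ((i : G)⁻¹ • ((k : G) • α)) := (smul_inv_smul _ _).symm
              _ = (i : G) • α := by rw [hk]
          rw [hA]
          simp only [mul_smul, this]
      rw [← Finset.card_univ]
      refine Finset.card_bij'
        (fun k hk => (⟨(i : G)⁻¹ * (k : G),
          (hiff k).1 (Finset.mem_filter.1 hk).2⟩ : P))
        (fun p' _ => (⟨(i : G) * (p' : G), mul_mem i.2 (hPQ p'.2)⟩ : Q)) ?_ ?_ ?_ ?_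
      · intro k hk
        exact Finset.mem_univ _
      · intro p' _
        refine Finset.mem_filter.2 ⟨Finset.mem_univ _, ?_⟩
        refine (hiff _).2 ?_
        simpa [inv_mul_cancel_left] using p'.2
      · intro k hk
        ext
        simp [mul_inv_cancel_left]
      · intro p' _
        ext
        simp [inv_mul_cancel_left]
    have hcount : ∀ i : Q, p * (Finset.univ.filter fun k : Q => A k = A i).card
        = q * Fintype.card Q := by
      intro i
      rw [hcard i, hp, hq]
      have h1 : P.index * Fintype.card P = Fintype.card G := by
        have := Subgroup.index_mul_card (H := P)
        simpa [Nat.card_eq_fintype_card] using this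
      have h2 : Q.index * Fintype.card Q = Fintype.card G := by
        have := Subgroup.index_mul_card (H := Q)
        simpa [Nat.card_eq_fintype_card] using this
      rw [h1, h2]
    exact core A B W hdisj p q (Fintype.card Q) hcount
  calc p * norm (α ∩ β) + q * norm (β ∪ ⋃ x ∈ Q, x • α)
      = ∑ j : J, (p * ∑ g : G, sep (α ∩ β) (g • Z j) +
          q * ∑ g : G, sep (β ∪ ⋃ x ∈ Q, x • α) (g • Z j)) := by
        rw [hnorm, hnorm, Finset.mul_sum, Finset.mul_sum, ← Finset.sum_add_distrib]
    _ ≤ ∑ j : J, (p * ∑ g : G, sep α (g • Z j) + q * ∑ g : G, sep β (g • Z j)) :=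
        Finset.sum_le_sum fun j _ => key (Z j)
    _ = p * norm α + q * norm β := by
        rw [hnorm, hnorm, Finset.mul_sum, Finset.mul_sum, ← Finset.sum_add_distrib]
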